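/- For the derivative functor D on FI-modules, D(M(i)) ≅ M(i−1)^{⊕ i} for all i ≥ 1, and D(M(0)) = 0; in particular D sends projective FI-modules to projective FI-modules. -/

import Mathlib

open CategoryTheory CategoryTheory.Limits

def FI : Type := ℕ
def FI.of : ℕ → FI := id
def FI.n : FI → ℕ := id
instance : Category FI where
  Hom m n := Fin m.n ↪ Fin n.n
  id _ := Function.Embedding.refl _
  comp f g := f.trans g
  id_comp _ := rfl
  comp_id _ := rfl
  assoc _ _ _ := rfl
abbrev FIMod (k : Type) [CommRing k] := FI ⥤ ModuleCat.{0} k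

/-- Extension of an injection `[m] → [n]` to `[m+1] → [n+1]` fixing the new first point. -/
def extEmb {m n : ℕ} (f : Fin m ↪ Fin n) : Fin (m + 1) ↪ Fin (n + 1) :=
  ⟨fun x => Fin.cases 0 (fun r => (f r).succ) x, by
    intro a b h
    induction a using Fin.cases with
    | zero =>
      induction b using Fin.cases with
      | zero => rfl
      | succ j => simp at h; exact absurd h.symm (Fin.succ_ne_zero _)
    | succ i =>
      induction b using Fin.cases with
      | zero => simp at h
      | succ j =>
        simp only [Fin.cases_succ] at h
        exact congrArg Fin.succ (f.injective (Fin.succ_injective _ h))⟩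

@[simp] lemma extEmb_zero {m n : ℕ} (f : Fin m ↪ Fin n) : extEmb f 0 = 0 := rfl
@[simp] lemma extEmb_succ {m n : ℕ} (f : Fin m ↪ Fin n) (r : Fin m) :
    extEmb f r.succ = (f r).succ := rfl

/-- Extensionality for morphisms in `FI`. -/
lemma FI.hom_ext {m n : FI} {f g : Fin m.n ↪ Fin n.n} (h : ∀ x, f x = g x) :
    f = g := DFunLike.ext f g h

/-- The self-embedding `ι : FI → FI`, `[n] ↦ [n+1]`. -/
def iota : FI ⥤ FI where
  obj n := FI.of (n.n + 1)
  map f := extEmb f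
  map_id n := by
    refine FI.hom_ext fun x => ?_
    induction x using Fin.cases <;> rfl
  map_comp {a b c} f g := by
    refine FI.hom_ext fun x => ?_
    induction x using Fin.cases with
    | zero => rfl
    | succ i =>
      show extEmb (f.trans g) i.succ = extEmb g (extEmb f i.succ)
      simp

variable (k : Type) [CommRing k]

/-- The shift functor `Σ` on `FI`-modules. -/
def shiftF : FIMod k ⥤ FIMod k := (Functor.whiskeringLeft FI FI (ModuleCat k)).obj iota

/-- The natural transformation `Id → ι` given by the inclusions `[n] ↪ [n+1]`, `r ↦ r+1`. -/
def piTrans : 𝟭 FI ⟶ iota where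
  app n := ⟨Fin.succ, Fin.succ_injective _⟩
  naturality m n f := by
    refine FI.hom_ext fun x => ?_
    rfl

/-- The natural map `V → ΣV`. -/
def toShift (V : FIMod k) : V ⟶ (shiftF k).obj V :=
  V.leftUnitor.inv ≫ Functor.whiskerRight piTrans V

/-- `V → ΣV` as a natural transformation of endofunctors. -/
def natToShift : 𝟭 (FIMod k) ⟶ shiftF k where
  app V := toShift k V
  naturality V W φ := by
    ext n
    simp only [Functor.id_obj, Functor.id_map, toShift, shiftF, Functor.whiskeringLeft_obj_obj,
      Functor.comp_obj, Category.assoc, NatTrans.comp_app, Functor.leftUnitor_inv_app,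
      Functor.whiskerRight_app, Functor.whiskeringLeft_obj_map, Functor.whiskerLeft_app, Category.id_comp]
    exact ConcreteCategory.congr_hom (φ.naturality (piTrans.app n)).symm _

/-- The derivative `DV`, the cokernel of `V → ΣV`. -/
noncomputable def Dobj (V : FIMod k) : FIMod k := cokernel (toShift k V)

/-- The derivative functor `D`. -/
noncomputable def Dfun : FIMod k ⥤ FIMod k where
  obj V := Dobj k V
  map {V W} φ := cokernel.map _ _ φ ((shiftF k).map φ) ((natToShift k).naturality φ).symm
  map_id V := by
    apply coequalizer.hom_ext
    simp [Dobj]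
  map_comp {U V W} φ ψ := by
    apply coequalizer.hom_ext
    simp [Dobj]

variable (k : Type) [CommRing k]

/-- An `FI`-submodule of an `FI`-module. -/
structure FISub {k : Type} [CommRing k] (V : FIMod k) where
  sub : ∀ n : FI, Submodule k (V.obj n)
  map_mem : ∀ {m n : FI} (f : m ⟶ n) (v : V.obj m), v ∈ sub m → (V.map f) v ∈ sub n

/-- `V` is generated in degrees `≤ N`. -/
def GeneratedIn {k : Type} [CommRing k] (V : FIMod k) (N : ℕ) : Prop :=
  ∀ W : FISub V, (∀ i : ℕ, i ≤ N → ∀ v : V.obj (FI.of i), v ∈ W.sub (FI.of i)) →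
    ∀ (n : FI) (v : V.obj n), v ∈ W.sub n

/-- `V` is a finitely generated `FI`-module. -/
def FG {k : Type} [CommRing k] (V : FIMod k) : Prop :=
  ∃ S : Finset ((n : ℕ) × V.obj (FI.of n)),
    ∀ W : FISub V, (∀ s ∈ S, s.2 ∈ W.sub (FI.of s.1)) → ∀ (n : FI) (v : V.obj n), v ∈ W.sub n

/-- `V` is torsionless: no nonzero element is killed by an injection. -/
def Torsionless {k : Type} [CommRing k] (V : FIMod k) : Prop :=
  ∀ (i : ℕ) (v : V.obj (FI.of i)), v ≠ 0 →
    ∀ α : FI.of i ⟶ FI.of (i + 1), (V.map α) v ≠ 0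


instance (k : Type) [CommRing k] : HasFiniteBiproducts (FIMod k) :=
  Abelian.hasFiniteBiproducts

variable (k : Type) [CommRing k]

/-- The free (representable) `FI`-module `M(i)`, the linearization of `FI(i,−)`. -/
noncomputable def Mrep (i : ℕ) : FIMod k where
  obj n := ModuleCat.of k ((Fin i ↪ Fin n.n) →₀ k)
  map {m n} f := ModuleCat.ofHom (Finsupp.lmapDomain k k fun (e : Fin i ↪ Fin m.n) => e.trans f)
  map_id n := by
    have : (fun e : Fin i ↪ Fin n.n => e.trans (𝟙 n)) = id := by
      funext e; ext x; rfl
    show ModuleCat.ofHom (Finsupp.lmapDomain k k _) = _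
    rw [this, Finsupp.lmapDomain_id]
    rfl
  map_comp {a b c} f g := by
    show ModuleCat.ofHom (Finsupp.lmapDomain k k _) = _
    have : (fun e : Fin i ↪ Fin a.n => e.trans (f ≫ g))
        = (fun e : Fin i ↪ Fin b.n => e.trans g) ∘ (fun e => e.trans f) := by
      funext e; ext x; rfl
    rw [this, Finsupp.lmapDomain_comp]
    rfl

lemma FI.le_of_hom {m n : FI} (f : m ⟶ n) : m.n ≤ n.n := by
  simpa using Fintype.card_le_of_embedding (f : Fin m.n ↪ Fin n.n)

/-- The submodule `(JV)_n ⊆ V_n` spanned by images from strictly lower degrees. -/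
def Jsub {k : Type} [CommRing k] (V : FIMod k) (n : FI) : Submodule k (V.obj n) :=
  ⨆ (m : FI) (_ : m.n < n.n) (f : m ⟶ n), LinearMap.range (V.map f).hom

lemma Jsub_le_comap {k : Type} [CommRing k] (V : FIMod k) {m n : FI} (f : m ⟶ n) :
    Jsub V m ≤ (Jsub V n).comap (V.map f).hom := by
  refine iSup_le fun m' => iSup_le fun hm' => iSup_le fun g => ?_
  rintro x ⟨y, rfl⟩
  simp only [Submodule.mem_comap]
  have h1 : (V.map f).hom ((V.map g).hom y) = (V.map (g ≫ f)).hom y := by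
    rw [V.map_comp]; rfl
  rw [h1]
  have h2 : m'.n < n.n := lt_of_lt_of_le hm' (FI.le_of_hom f)
  refine Submodule.mem_iSup_of_mem m' ?_
  refine Submodule.mem_iSup_of_mem h2 ?_
  exact Submodule.mem_iSup_of_mem (g ≫ f) ⟨y, rfl⟩

/-- The degreewise quotient `H₀(V) = V/JV` as an `FI`-module. -/
noncomputable def H0obj {k : Type} [CommRing k] (V : FIMod k) : FIMod k where
  obj n := ModuleCat.of k (V.obj n ⧸ Jsub V n)
  map {m n} f := ModuleCat.ofHom (Submodule.mapQ _ _ (V.map f).hom (Jsub_le_comap V f))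
  map_id n := by
    have h : V.map (𝟙 n) = 𝟙 (V.obj n) := V.map_id n
    refine ModuleCat.hom_ext (Submodule.linearMap_qext _ ?_)
    ext x
    show Submodule.Quotient.mk ((V.map (𝟙 n)).hom x) = _
    rw [h]
    rfl
  map_comp {a b c} f g := by
    have h : V.map (f ≫ g) = V.map f ≫ V.map g := V.map_comp f g
    refine ModuleCat.hom_ext (Submodule.linearMap_qext _ ?_)
    ext x
    show Submodule.Quotient.mk ((V.map (f ≫ g)).hom x) = _
    rw [h]
    rfl

/-- The functor `H₀ = ℂ̃₀ ⊗_{ℂ̃} − : FI-Mod → FI-Mod`. -/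
noncomputable def H0Functor (k : Type) [CommRing k] : FIMod k ⥤ FIMod k where
  obj := H0obj
  map {V W} φ :=
    { app := fun n => ModuleCat.ofHom (Submodule.mapQ (Jsub V n) (Jsub W n) (φ.app n).hom (by
        refine iSup_le fun m => iSup_le fun hm => iSup_le fun g => ?_
        rintro x ⟨y, rfl⟩
        simp only [Submodule.mem_comap]
        have h1 : (φ.app n).hom ((V.map g).hom y) = (W.map g).hom ((φ.app m).hom y) :=
          ConcreteCategory.congr_hom (φ.naturality g) y
        rw [h1]
        refine Submodule.mem_iSup_of_mem m (Submodule.mem_iSup_of_mem hm ?_)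
        exact Submodule.mem_iSup_of_mem g ⟨_, rfl⟩)),
      naturality := by
        intro m n f
        refine ModuleCat.hom_ext (Submodule.linearMap_qext _ ?_)
        ext x
        have h : (φ.app n).hom ((V.map f).hom x) = (W.map f).hom ((φ.app m).hom x) :=
          ConcreteCategory.congr_hom (φ.naturality f) x
        show Submodule.Quotient.mk ((φ.app n).hom ((V.map f).hom x)) = _
        rw [h]
        rfl }
  map_id V := by
    ext n : 2
    refine ModuleCat.hom_ext (Submodule.linearMap_qext _ ?_)
    ext x
    rfl
  map_comp {U V W} φ ψ := by
    ext n : 2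
    refine ModuleCat.hom_ext (Submodule.linearMap_qext _ ?_)
    ext x
    rfl

instance (k : Type) [CommRing k] : (H0Functor k).Additive where
  map_add := by
    intro V W φ ψ
    ext n : 2
    refine ModuleCat.hom_ext (Submodule.linearMap_qext _ ?_)
    ext x
    show Submodule.Quotient.mk ((φ.app n).hom x + (ψ.app n).hom x) =
      (((H0Functor k).map φ).app n).hom (Submodule.Quotient.mk x) +
      (((H0Functor k).map ψ).app n).hom (Submodule.Quotient.mk x)
    rw [Submodule.Quotient.mk_add]
    rfl

/-- The homology functor `H_s(−) = Tor_s^{ℂ̃}(ℂ̃₀, −)`, as the `s`-th left derived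
functor of `H₀`. -/
noncomputable def Hs (k : Type) [CommRing k] [EnoughProjectives (FIMod k)] (s : ℕ) :
    FIMod k ⥤ FIMod k :=
  (H0Functor k).leftDerived s

/-- Strictly monotone injections `[i] → [n]`, a set of representatives for the orbits of
the right action of `S_i` on `FI(i,n)`. -/
def OrdInj (i n : ℕ) : Type := {e : Fin i ↪ Fin n // StrictMono e}

noncomputable instance (i n : ℕ) : Fintype (OrdInj i n) := by
  classical
  unfold OrdInj
  infer_instance

/-- The canonical map `⊕_{e ∈ OrdInj(i,n)} V_i → V_n`, `(v_e) ↦ Σ_e e·v_e`.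
It is bijective for every `n` exactly when `V` is the induced module
`ℂ̃ ⊗_{k[S_i]} V_i`. -/
noncomputable def basicMap {k : Type} [CommRing k] (V : FIMod k) (i n : ℕ) :
    (OrdInj i n → V.obj (FI.of i)) →ₗ[k] V.obj (FI.of n) :=
  ∑ e : OrdInj i n, (V.map (e.1 : FI.of i ⟶ FI.of n)).hom.comp (LinearMap.proj e)

/-- `V` is (isomorphic to) a basic `♯`-filtered module `ℂ̃ ⊗_{k[S_i]} T` with `T = V_i`. -/
def BasicSharp {k : Type} [CommRing k] (V : FIMod k) (i : ℕ) : Prop :=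
  (∀ j : ℕ, j < i → Subsingleton (V.obj (FI.of j))) ∧
    ∀ n : ℕ, Function.Bijective (basicMap V i n)

/-- `V` admits a filtration of length `m` whose successive quotients are basic
`♯`-filtered modules. -/
def SharpChain {k : Type} [CommRing k] : ℕ → FIMod k → Prop
  | 0, V => IsZero V
  | m + 1, V => ∃ (U W : FIMod k) (f : U ⟶ V) (g : V ⟶ W) (w : f ≫ g = 0),
      (ShortComplex.mk f g w).ShortExact ∧ SharpChain m U ∧ ∃ i, BasicSharp W i

/-- `V` is a `♯`-filtered `FI`-module. -/
def SharpFiltered {k : Type} [CommRing k] (V : FIMod k) : Prop :=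
  ∃ m, SharpChain m V

/-- `pdLE n M` : `M` has projective dimension `≤ n`. -/
noncomputable def pdLE {C : Type*} [Category C] [Abelian C] : ℕ → C → Prop
  | 0, M => Projective M
  | n + 1, M => ∃ (P : C) (f : P ⟶ M), Projective P ∧ Epi f ∧ pdLE n (kernel f)

/-- The `d`-th iterated shift `Σ_d V`. -/
def shiftIter (k : Type) [CommRing k] : ℕ → FIMod k → FIMod k
  | 0, V => V
  | d + 1, V => (shiftF k).obj (shiftIter k d V)

/-- A permutation of `[i]` as a morphism in `FI`. -/
def permHom (i : ℕ) (g : Equiv.Perm (Fin i)) : FI.of i ⟶ FI.of i := g.toEmbedding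

/-- The representation of the symmetric group `S_i` on `V_i` coming from the
`FI`-module structure. -/
def permRep {k : Type} [CommRing k] (V : FIMod k) (i : ℕ) :
    Representation k (Equiv.Perm (Fin i)) (V.obj (FI.of i)) where
  toFun g := (V.map (permHom i g)).hom
  map_one' := by
    have h1 : permHom i 1 = 𝟙 (FI.of i) := rfl
    show (V.map (permHom i 1)).hom = (1 : Module.End k (V.obj (FI.of i)))
    rw [h1, V.map_id]; rfl
  map_mul' g h := by
    have h1 : permHom i (g * h) = permHom i h ≫ permHom i g := rfl
    show (V.map (permHom i (g * h))).hom = (V.map (permHom i g)).hom * (V.map (permHom i h)).hom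
    rw [h1, V.map_comp]; rfl


section Stmt7Aux

open Finsupp

/-! ### Combinatorics of embeddings -/

/-- `Fin.succ` as an embedding. -/
def succEmb (n : ℕ) : Fin n ↪ Fin (n + 1) := ⟨Fin.succ, Fin.succ_injective n⟩

@[simp] lemma succEmb_apply {n : ℕ} (x : Fin n) : succEmb n x = x.succ := rfl

lemma extEmb_eq_zero_iff {m n : ℕ} (g : Fin m ↪ Fin n) (x : Fin (m + 1)) :
    extEmb g x = 0 ↔ x = 0 := by
  constructor
  · intro h
    induction x using Fin.cases with
    | zero => rfl
    | succ t => rw [extEmb_succ] at h; exact absurd h (Fin.succ_ne_zero _)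
  · rintro rfl; rfl

lemma predHelper {n : ℕ} {a : Fin (n + 1)} {h : a ≠ 0} {b : Fin n} (hab : a = b.succ) :
    a.pred h = b := by subst hab; exact Fin.pred_succ _

lemma extEmb_pred {m n : ℕ} (g : Fin m ↪ Fin n) (s : Fin (m + 1)) (h1 : extEmb g s ≠ 0)
    (h2 : s ≠ 0) : (extEmb g s).pred h1 = g (s.pred h2) := by
  apply predHelper
  conv_lhs => rw [← Fin.succ_pred s h2]
  rw [extEmb_succ]

/-- Insert a new value `0` at position `r`. -/
def insertEmb {j n : ℕ} (r : Fin (j + 1)) (f : Fin j ↪ Fin n) : Fin (j + 1) ↪ Fin (n + 1) :=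
  ⟨fun x => Fin.insertNth (α := fun _ => Fin (n + 1)) r 0 (fun t => (f t).succ) x, by
    intro a b h
    by_cases ha : a = r
    · subst ha
      by_cases hb : b = a
      · exact hb.symm
      · obtain ⟨t, rfl⟩ := Fin.exists_succAbove_eq hb
        simp only [Fin.insertNth_apply_same, Fin.insertNth_apply_succAbove] at h
        exact absurd h.symm (Fin.succ_ne_zero _)
    · obtain ⟨t, rfl⟩ := Fin.exists_succAbove_eq ha
      by_cases hb : b = r
      · subst hb
        simp only [Fin.insertNth_apply_same, Fin.insertNth_apply_succAbove] at h
        exact absurd h (Fin.succ_ne_zero _)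
      · obtain ⟨u, rfl⟩ := Fin.exists_succAbove_eq hb
        simp only [Fin.insertNth_apply_succAbove] at h
        exact congrArg r.succAbove (f.injective (Fin.succ_injective _ h))⟩

@[simp] lemma insertEmb_same {j n : ℕ} (r : Fin (j + 1)) (f : Fin j ↪ Fin n) :
    insertEmb r f r = 0 := by
  show Fin.insertNth (α := fun _ => Fin (n + 1)) r 0 (fun t => (f t).succ) r = 0
  simp

@[simp] lemma insertEmb_succAbove {j n : ℕ} (r : Fin (j + 1)) (f : Fin j ↪ Fin n) (t : Fin j) :
    insertEmb r f (r.succAbove t) = (f t).succ := by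
  show Fin.insertNth (α := fun _ => Fin (n + 1)) r 0 (fun t => (f t).succ) (r.succAbove t) = _
  simp

lemma restrict_ne_zero {j n : ℕ} (r : Fin (j + 1)) (e : Fin (j + 1) ↪ Fin (n + 1))
    (he : e r = 0) (t : Fin j) : e (r.succAbove t) ≠ 0 :=
  fun h0 => (Fin.succAbove_ne r t) (e.injective (h0.trans he.symm))

/-- Restrict an embedding `e` with `e r = 0` away from `r`, discarding the value `0`. -/
def restrictEmb {j n : ℕ} (r : Fin (j + 1)) (e : Fin (j + 1) ↪ Fin (n + 1))
    (he : e r = 0) : Fin j ↪ Fin n :=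
  ⟨fun t => (e (r.succAbove t)).pred (restrict_ne_zero r e he t), by
    intro a b h
    have h' := congrArg Fin.succ h
    rw [Fin.succ_pred, Fin.succ_pred] at h'
    exact Fin.succAbove_right_injective (e.injective h')⟩

lemma restrictEmb_apply {j n : ℕ} (r : Fin (j + 1)) (e : Fin (j + 1) ↪ Fin (n + 1))
    (he : e r = 0) (t : Fin j) :
    restrictEmb r e he t = (e (r.succAbove t)).pred (restrict_ne_zero r e he t) := rfl

/-- Shift down an embedding avoiding `0`. -/
def predEmb {i n : ℕ} (e : Fin i ↪ Fin (n + 1)) (he : ∀ x, e x ≠ 0) : Fin i ↪ Fin n :=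
  ⟨fun x => (e x).pred (he x), by
    intro a b h
    have h' := congrArg Fin.succ h
    rw [Fin.succ_pred, Fin.succ_pred] at h'
    exact e.injective h'⟩

lemma predEmb_apply {i n : ℕ} (e : Fin i ↪ Fin (n + 1)) (he : ∀ x, e x ≠ 0) (x : Fin i) :
    predEmb e he x = (e x).pred (he x) := rfl

lemma restrictEmb_insertEmb {j n : ℕ} (r : Fin (j + 1)) (f : Fin j ↪ Fin n) (h) :
    restrictEmb r (insertEmb r f) h = f := by
  refine DFunLike.ext _ _ fun t => ?_
  rw [restrictEmb_apply]
  exact predHelper (insertEmb_succAbove r f t)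

lemma insertEmb_restrictEmb {j n : ℕ} (r : Fin (j + 1)) (e : Fin (j + 1) ↪ Fin (n + 1))
    (he : e r = 0) : insertEmb r (restrictEmb r e he) = e := by
  refine DFunLike.ext _ _ fun x => ?_
  by_cases hx : x = r
  · subst hx
    rw [insertEmb_same, he]
  · obtain ⟨t, rfl⟩ := Fin.exists_succAbove_eq hx
    rw [insertEmb_succAbove, restrictEmb_apply, Fin.succ_pred]

lemma insertEmb_trans {j n n' : ℕ} (r : Fin (j + 1)) (f : Fin j ↪ Fin n)
    (g : Fin n ↪ Fin n') : (insertEmb r f).trans (extEmb g) = insertEmb r (f.trans g) := by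
  refine DFunLike.ext _ _ fun x => ?_
  by_cases hx : x = r
  · rw [hx]
    show extEmb g (insertEmb r f r) = insertEmb r (f.trans g) r
    rw [insertEmb_same, insertEmb_same, extEmb_zero]
  · obtain ⟨t, rfl⟩ := Fin.exists_succAbove_eq hx
    show extEmb g (insertEmb r f (r.succAbove t)) = insertEmb r (f.trans g) (r.succAbove t)
    rw [insertEmb_succAbove, extEmb_succ, insertEmb_succAbove]
    rfl

lemma restrictEmb_trans {j n n' : ℕ} (r : Fin (j + 1)) (e : Fin (j + 1) ↪ Fin (n + 1))
    (g : Fin n ↪ Fin n') (he : e r = 0) (he') :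
    restrictEmb r (e.trans (extEmb g)) he' = (restrictEmb r e he).trans g := by
  refine DFunLike.ext _ _ fun t => ?_
  show ((e.trans (extEmb g)) (r.succAbove t)).pred
      (restrict_ne_zero r (e.trans (extEmb g)) he' t) =
    g ((e (r.succAbove t)).pred (restrict_ne_zero r e he t))
  exact extEmb_pred g _ _ (restrict_ne_zero r e he t)

lemma predEmb_trans {i n n' : ℕ} (e : Fin i ↪ Fin (n + 1)) (g : Fin n ↪ Fin n')
    (he : ∀ x, e x ≠ 0) (he') :
    predEmb (e.trans (extEmb g)) he' = (predEmb e he).trans g := by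
  refine DFunLike.ext _ _ fun t => ?_
  show ((e.trans (extEmb g)) t).pred (he' t) = g ((e t).pred (he t))
  exact extEmb_pred g _ _ (he t)

lemma succEmb_predEmb {i n : ℕ} (e : Fin i ↪ Fin (n + 1)) (he : ∀ x, e x ≠ 0) :
    (predEmb e he).trans (succEmb n) = e := by
  refine DFunLike.ext _ _ fun x => ?_
  show ((e x).pred (he x)).succ = e x
  exact Fin.succ_pred _ _

lemma predEmb_succEmb {i n : ℕ} (e : Fin i ↪ Fin n) (he) :
    predEmb (e.trans (succEmb n)) he = e := by
  refine DFunLike.ext _ _ fun x => ?_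
  show ((e.trans (succEmb n)) x).pred (he x) = e x
  exact predHelper rfl

/-! ### The natural transformations `q`, `σ`, `ρ` -/

variable (k : Type) [CommRing k]

lemma toShift_Mrep_app (i : ℕ) (n : FI) :
    (toShift k (Mrep k i)).app n =
      ModuleCat.ofHom (Finsupp.lmapDomain k k (fun e : Fin i ↪ Fin n.n => e.trans (succEmb n.n))) := by
  simp only [toShift, NatTrans.comp_app, Functor.leftUnitor_inv_app, Functor.whiskerRight_app,
    Category.id_comp]
  rfl

lemma shiftMrep_map (i : ℕ) {m n : FI} (g : m ⟶ n) :
    ((shiftF k).obj (Mrep k i)).map g =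
      ModuleCat.ofHom (Finsupp.lmapDomain k k
        (fun e : Fin i ↪ Fin (m.n + 1) => e.trans (extEmb g))) := rfl

/-- The projection `Σ M(j+1) → M(j)` singling out embeddings hitting `0` at `r`. -/
noncomputable def qmap (j : ℕ) (r : Fin (j + 1)) :
    (shiftF k).obj (Mrep k (j + 1)) ⟶ Mrep k j where
  app n := ModuleCat.ofHom (Finsupp.lsum k fun e : Fin (j + 1) ↪ Fin (n.n + 1) =>
    if he : e r = 0 then Finsupp.lsingle (restrictEmb r e he) else 0 :
    ((Fin (j + 1) ↪ Fin (n.n + 1)) →₀ k) →ₗ[k] ((Fin j ↪ Fin n.n) →₀ k))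
  naturality m n g := by
    refine ModuleCat.hom_ext (Finsupp.lhom_ext fun (e : Fin (j + 1) ↪ Fin (m.n + 1)) a => ?_)
    show (Finsupp.lsum k _) (Finsupp.lmapDomain k k
        (fun e : Fin (j + 1) ↪ Fin (m.n + 1) => e.trans (extEmb g)) (Finsupp.single e a)) =
      Finsupp.lmapDomain k k _ ((Finsupp.lsum k _) (Finsupp.single e a))
    rw [lmapDomain_apply, mapDomain_single, lsum_single, lsum_single]
    split_ifs with h1 h2 h2
    · rw [lsingle_apply, lsingle_apply, lmapDomain_apply, mapDomain_single]
      congr 1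
      exact restrictEmb_trans r e g h2 h1
    · exact absurd ((extEmb_eq_zero_iff g (e r)).mp h1) h2
    · exact absurd ((extEmb_eq_zero_iff g (e r)).mpr h2) h1
    · erw [LinearMap.zero_apply]

/-- The inclusion `M(j) → Σ M(j+1)` inserting the value `0` at `r`. -/
noncomputable def smap (j : ℕ) (r : Fin (j + 1)) :
    Mrep k j ⟶ (shiftF k).obj (Mrep k (j + 1)) where
  app n := ModuleCat.ofHom (Finsupp.lsum k fun f : Fin j ↪ Fin n.n => Finsupp.lsingle (insertEmb r f) :
    ((Fin j ↪ Fin n.n) →₀ k) →ₗ[k] ((Fin (j + 1) ↪ Fin (n.n + 1)) →₀ k))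
  naturality m n g := by
    refine ModuleCat.hom_ext (Finsupp.lhom_ext fun f a => ?_)
    show (Finsupp.lsum k _) (Finsupp.lmapDomain k k (fun e : Fin j ↪ Fin m.n => e.trans g)
        (Finsupp.single f a)) =
      Finsupp.lmapDomain k k (fun e : Fin (j + 1) ↪ Fin (m.n + 1) => e.trans (extEmb g))
        ((Finsupp.lsum k _) (Finsupp.single f a))
    rw [lmapDomain_apply, mapDomain_single, lsum_single, lsum_single, lsingle_apply]
    erw [lsingle_apply]
    rw [lmapDomain_apply, mapDomain_single]
    congr 1
    exact (insertEmb_trans r f g).symm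

/-- The retraction `Σ M(i) → M(i)` of `toShift`. -/
noncomputable def rmap (i : ℕ) : (shiftF k).obj (Mrep k i) ⟶ Mrep k i where
  app n := ModuleCat.ofHom (Finsupp.lsum k fun e : Fin i ↪ Fin (n.n + 1) =>
    if he : ∀ x, e x ≠ 0 then Finsupp.lsingle (predEmb e he) else 0 :
    ((Fin i ↪ Fin (n.n + 1)) →₀ k) →ₗ[k] ((Fin i ↪ Fin n.n) →₀ k))
  naturality m n g := by
    refine ModuleCat.hom_ext (Finsupp.lhom_ext fun (e : Fin i ↪ Fin (m.n + 1)) a => ?_)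
    show (Finsupp.lsum k _) (Finsupp.lmapDomain k k
        (fun e : Fin i ↪ Fin (m.n + 1) => e.trans (extEmb g)) (Finsupp.single e a)) =
      Finsupp.lmapDomain k k _ ((Finsupp.lsum k _) (Finsupp.single e a))
    rw [lmapDomain_apply, mapDomain_single, lsum_single, lsum_single]
    split_ifs with h1 h2 h2
    · rw [lsingle_apply, lsingle_apply, lmapDomain_apply, mapDomain_single]
      congr 1
      exact predEmb_trans e g h2 h1
    · exact absurd (fun x hx => h1 x ((extEmb_eq_zero_iff g (e x)).mpr hx)) h2
    · exact absurd (fun x hx => h2 x ((extEmb_eq_zero_iff g (e x)).mp hx)) h1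
    · erw [LinearMap.zero_apply]

lemma zeroHelper {β γ : Type} [AddCommMonoid β] [Module k β] [AddCommMonoid γ] [Module k γ]
    (ψ : β →ₗ[k] γ) (a : k) : ψ ((0 : k →ₗ[k] β) a) = 0 := by
  rw [LinearMap.zero_apply, map_zero]

lemma toShift_rmap (i : ℕ) : toShift k (Mrep k i) ≫ rmap k i = 𝟙 (Mrep k i) := by
  ext n : 2
  refine ModuleCat.hom_ext (Finsupp.lhom_ext fun e a => ?_)
  show (Finsupp.lsum k _) ((Finsupp.lmapDomain k k
      (fun e : Fin i ↪ Fin n.n => e.trans (succEmb n.n))) (Finsupp.single e a)) =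
    Finsupp.single e a
  rw [lmapDomain_apply, mapDomain_single, lsum_single]
  split_ifs with h
  · rw [lsingle_apply, predEmb_succEmb]
  · exact absurd (fun x => Fin.succ_ne_zero (e x)) h

lemma smap_qmap_same (j : ℕ) (r : Fin (j + 1)) : smap k j r ≫ qmap k j r = 𝟙 (Mrep k j) := by
  ext n : 2
  refine ModuleCat.hom_ext (Finsupp.lhom_ext fun f a => ?_)
  show (qmap k j r).app n ((smap k j r).app n (Finsupp.single f a)) = Finsupp.single f a
  show (Finsupp.lsum k _) ((Finsupp.lsum k _) (Finsupp.single f a)) = Finsupp.single f a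
  rw [lsum_single, lsingle_apply, lsum_single]
  split_ifs with h
  · rw [lsingle_apply, restrictEmb_insertEmb]
  · exact absurd (insertEmb_same r f) h

lemma smap_qmap_ne (j : ℕ) (r r' : Fin (j + 1)) (h : r ≠ r') :
    smap k j r ≫ qmap k j r' = 0 := by
  ext n : 2
  rw [Limits.zero_app]
  refine ModuleCat.hom_ext (Finsupp.lhom_ext fun f a => ?_)
  show (qmap k j r').app n ((smap k j r).app n (Finsupp.single f a)) = _
  show (Finsupp.lsum k _ : ((Fin (j + 1) ↪ Fin (n.n + 1)) →₀ k) →ₗ[k] ((Fin j ↪ Fin n.n) →₀ k)) ((Finsupp.lsum k _ : ((Fin j ↪ Fin n.n) →₀ k) →ₗ[k] ((Fin (j + 1) ↪ Fin (n.n + 1)) →₀ k)) (Finsupp.single f a)) = _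
  rw [lsum_single, lsingle_apply, lsum_single]
  have hne : insertEmb r f r' ≠ (0 : Fin (n.n + 1)) := by
    obtain ⟨t, ht⟩ := Fin.exists_succAbove_eq (Ne.symm h)
    rw [← ht, insertEmb_succAbove]
    exact Fin.succ_ne_zero _
  split_ifs with h2
  · exact absurd h2 hne
  · erw [LinearMap.zero_apply]

lemma toShift_qmap (j : ℕ) (r : Fin (j + 1)) :
    toShift k (Mrep k (j + 1)) ≫ qmap k j r = 0 := by
  ext n : 2
  rw [Limits.zero_app]
  refine ModuleCat.hom_ext (Finsupp.lhom_ext fun e a => ?_)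
  show (Finsupp.lsum k _ : ((Fin (j + 1) ↪ Fin (n.n + 1)) →₀ k) →ₗ[k] ((Fin j ↪ Fin n.n) →₀ k)) ((Finsupp.lmapDomain k k
      (fun e : Fin (j + 1) ↪ Fin n.n => e.trans (succEmb n.n))) (Finsupp.single e a)) = _
  rw [lmapDomain_apply, mapDomain_single, lsum_single]
  split_ifs with h
  · exact absurd h (Fin.succ_ne_zero (e r))
  · erw [LinearMap.zero_apply]

/-- The key decomposition of the identity of `Σ M(j+1)`. -/
lemma shift_decomp (j : ℕ) :
    (∑ r : Fin (j + 1), qmap k j r ≫ smap k j r) +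
      rmap k (j + 1) ≫ toShift k (Mrep k (j + 1)) =
      𝟙 ((shiftF k).obj (Mrep k (j + 1))) := by
  ext n : 2
  refine ModuleCat.hom_ext (Finsupp.lhom_ext fun (e₀ : Fin (j + 1) ↪ Fin (n.n + 1)) a => ?_)
  rw [NatTrans.app_add, NatTrans.app_sum, ModuleCat.hom_add, ModuleCat.hom_sum]
  refine (LinearMap.add_apply (M := ((shiftF k).obj (Mrep k (j + 1))).obj n) _ _ _).trans
    ((congrArg (· + _) (LinearMap.sum_apply (M := ((shiftF k).obj (Mrep k (j + 1))).obj n)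
      _ _ _)).trans ?_)
  let e : Fin (j + 1) ↪ Fin (n.n + 1) := e₀
  show (∑ r : Fin (j + 1), (qmap k j r ≫ smap k j r).app n (Finsupp.single e a)) +
      (rmap k (j + 1) ≫ toShift k (Mrep k (j + 1))).app n (Finsupp.single e a) =
      Finsupp.single e a
  by_cases he : ∀ x, e x ≠ (0 : Fin (n.n + 1))
  · have hq : ∀ r : Fin (j + 1),
        (qmap k j r ≫ smap k j r).app n (Finsupp.single e a) = 0 := by
      intro r
      show (smap k j r).app n ((Finsupp.lsum k _ : ((Fin (j + 1) ↪ Fin (n.n + 1)) →₀ k) →ₗ[k] ((Fin j ↪ Fin n.n) →₀ k)) (Finsupp.single e a)) = 0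
      rw [lsum_single]
      split_ifs with h
      · exact absurd h (he r)
      · exact zeroHelper k ((smap k j r).app n).hom a
    rw [Finset.sum_congr rfl (fun r _ => hq r), Finset.sum_const_zero, zero_add]
    show (toShift k (Mrep k (j + 1))).app n ((Finsupp.lsum k _ : ((Fin (j + 1) ↪ Fin (n.n + 1)) →₀ k) →ₗ[k] ((Fin (j + 1) ↪ Fin n.n) →₀ k)) (Finsupp.single e a)) = _
    rw [lsum_single]
    split_ifs with h
    · show (Finsupp.lmapDomain k k (fun e : Fin (j + 1) ↪ Fin n.n => e.trans (succEmb n.n)))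
          (Finsupp.single (predEmb e h) a) = Finsupp.single e a
      rw [lmapDomain_apply, mapDomain_single, succEmb_predEmb]
    · exact absurd he h
  · push_neg at he
    obtain ⟨r₀, hr₀⟩ := he
    have hrho :
        (rmap k (j + 1) ≫ toShift k (Mrep k (j + 1))).app n (Finsupp.single e a) = 0 := by
      show (toShift k (Mrep k (j + 1))).app n ((Finsupp.lsum k _ : ((Fin (j + 1) ↪ Fin (n.n + 1)) →₀ k) →ₗ[k] ((Fin (j + 1) ↪ Fin n.n) →₀ k)) (Finsupp.single e a)) = 0
      rw [lsum_single]
      split_ifs with h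
      · exact absurd hr₀ (h r₀)
      · exact zeroHelper k ((toShift k (Mrep k (j + 1))).app n).hom a
    rw [hrho, add_zero]
    rw [Finset.sum_eq_single r₀]
    · show (smap k j r₀).app n ((Finsupp.lsum k _ : ((Fin (j + 1) ↪ Fin (n.n + 1)) →₀ k) →ₗ[k] ((Fin j ↪ Fin n.n) →₀ k)) (Finsupp.single e a)) = _
      rw [lsum_single]
      split_ifs with h
      · show (Finsupp.lsum k _ : ((Fin j ↪ Fin n.n) →₀ k) →ₗ[k] ((Fin (j + 1) ↪ Fin (n.n + 1)) →₀ k))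
            (Finsupp.single (restrictEmb r₀ e h) a) = _
        rw [lsum_single]
        show Finsupp.single (insertEmb r₀ (restrictEmb r₀ e h)) a = Finsupp.single e a
        rw [insertEmb_restrictEmb]
      · exact absurd hr₀ h
    · intro r _ hr
      show (smap k j r).app n ((Finsupp.lsum k _ : ((Fin (j + 1) ↪ Fin (n.n + 1)) →₀ k) →ₗ[k] ((Fin j ↪ Fin n.n) →₀ k)) (Finsupp.single e a)) = 0
      have hne : ¬e r = (0 : Fin (n.n + 1)) := fun h0 =>
        hr (e.injective (h0.trans hr₀.symm))
      rw [lsum_single]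
      split_ifs with h
      · exact absurd h hne
      · exact zeroHelper k ((smap k j r).app n).hom a
    · intro h
      exact absurd (Finset.mem_univ r₀) h

/-! ### Part 1: `D M(j+1) ≅ M(j)^{⊕ (j+1)}` -/

/-- The components `D M(j+1) → M(j)`. -/
noncomputable def pmap (j : ℕ) (r : Fin (j + 1)) :
    cokernel (toShift k (Mrep k (j + 1))) ⟶ Mrep k j :=
  cokernel.desc _ (qmap k j r) (toShift_qmap k j r)

lemma pmap_pi (j : ℕ) (r : Fin (j + 1)) :
    cokernel.π (toShift k (Mrep k (j + 1))) ≫ pmap k j r = qmap k j r :=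
  cokernel.π_desc _ _ _

lemma DM_iso (j : ℕ) :
    Nonempty (Dobj k (Mrep k (j + 1)) ≅ ⨁ fun _ : Fin (j + 1) => Mrep k j) := by
  refine ⟨⟨biproduct.lift (pmap k j), biproduct.desc (fun r => smap k j r ≫ cokernel.π _),
    ?_, ?_⟩⟩
  · show biproduct.lift (pmap k j) ≫ biproduct.desc (fun r => smap k j r ≫ cokernel.π _) =
      𝟙 (cokernel (toShift k (Mrep k (j + 1))))
    rw [biproduct.lift_desc]
    rw [← cancel_epi (cokernel.π (toShift k (Mrep k (j + 1))))]
    rw [Preadditive.comp_sum, Category.comp_id]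
    have hterm : ∀ r : Fin (j + 1),
        cokernel.π (toShift k (Mrep k (j + 1))) ≫ pmap k j r ≫
            (smap k j r ≫ cokernel.π (toShift k (Mrep k (j + 1)))) =
          (qmap k j r ≫ smap k j r) ≫ cokernel.π (toShift k (Mrep k (j + 1))) := by
      intro r
      rw [← Category.assoc, pmap_pi, Category.assoc, ← Category.assoc]
    rw [Finset.sum_congr rfl (fun r _ => hterm r), ← Preadditive.sum_comp]
    have h2 : (∑ r : Fin (j + 1), qmap k j r ≫ smap k j r) =
        𝟙 ((shiftF k).obj (Mrep k (j + 1))) - rmap k (j + 1) ≫ toShift k (Mrep k (j + 1)) := by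
      rw [← shift_decomp k j]; abel
    rw [h2, Preadditive.sub_comp, Category.id_comp, Category.assoc, cokernel.condition,
      Limits.comp_zero, sub_zero]
  · refine biproduct.hom_ext' _ _ fun r' => biproduct.hom_ext _ _ fun r => ?_
    dsimp only [Dobj]
    simp only [Category.assoc, biproduct.ι_desc_assoc, biproduct.lift_π, Category.id_comp]
    rw [pmap_pi]
    rcases eq_or_ne r' r with rfl | h
    · rw [smap_qmap_same, biproduct.ι_π_self]
    · rw [smap_qmap_ne k j r' r h, biproduct.ι_π_ne _ h]

/-! ### Part 2 : `D M(0) = 0` -/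

lemma DM0_isZero : IsZero (Dobj k (Mrep k 0)) := by
  have happ : ∀ n, Epi ((toShift k (Mrep k 0)).app n) := by
    intro n
    rw [ModuleCat.epi_iff_surjective]
    intro (y : (Fin 0 ↪ Fin (n.n + 1)) →₀ k)
    refine ⟨Finsupp.lmapDomain k k (fun _ : Fin 0 ↪ Fin (n.n + 1) =>
      (⟨Fin.elim0, fun x => x.elim0⟩ : Fin 0 ↪ Fin n.n)) y, ?_⟩
    show (toShift k (Mrep k 0)).app n (Finsupp.lmapDomain k k _ y) = y
    rw [toShift_Mrep_app]
    show Finsupp.mapDomain (fun e : Fin 0 ↪ Fin n.n => e.trans (succEmb n.n))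
      (Finsupp.mapDomain (fun _ : Fin 0 ↪ Fin (n.n + 1) =>
        (⟨Fin.elim0, fun x => x.elim0⟩ : Fin 0 ↪ Fin n.n)) y) = y
    rw [← Finsupp.mapDomain_comp]
    have hid : ((fun e : Fin 0 ↪ Fin n.n => e.trans (succEmb n.n)) ∘
        (fun _ : Fin 0 ↪ Fin (n.n + 1) =>
          (⟨Fin.elim0, fun x => x.elim0⟩ : Fin 0 ↪ Fin n.n))) = id := by
      funext e
      refine DFunLike.ext _ _ fun x => x.elim0
    rw [hid, Finsupp.mapDomain_id]
  haveI := happ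
  haveI : Epi (toShift k (Mrep k 0)) := NatTrans.epi_of_epi_app _
  exact (isZero_zero _).of_iso (cokernel.ofEpi (toShift k (Mrep k 0)))

/-! ### Part 3 : `D` preserves projectives -/

section ProjGeneral

variable {C : Type*} [Category C]

lemma proj_of_retract {X Y : C} (s : X ⟶ Y) (r : Y ⟶ X) (hsr : s ≫ r = 𝟙 X)
    (hY : Projective Y) : Projective X := by
  constructor
  intro E W f e he
  obtain ⟨g, hg⟩ := hY.factors (r ≫ f) e
  exact ⟨s ≫ g, by rw [Category.assoc, hg, ← Category.assoc, hsr, Category.id_comp]⟩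

lemma proj_of_isZero {X : C} (h : IsZero X) [HasZeroMorphisms C] : Projective X := by
  constructor
  intro E W f e he
  exact ⟨0, h.eq_of_src _ _⟩

lemma proj_of_isColimit_discrete {ι : Type*} {Dg : Discrete ι ⥤ C}
    (hproj : ∀ s : Discrete ι, Projective (Dg.obj s))
    {c : Cocone Dg} (hc : IsColimit c) : Projective c.pt := by
  constructor
  intro E W f e he
  have H : ∀ s : Discrete ι, ∃ g, g ≫ e = c.ι.app s ≫ f := fun s =>
    (hproj s).factors (c.ι.app s ≫ f) e
  choose g hg using H
  refine ⟨hc.desc ⟨E, Discrete.natTrans g⟩, hc.hom_ext fun s => ?_⟩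
  rw [← Category.assoc, hc.fac]
  exact hg s

end ProjGeneral

section SplitProj

variable {C : Type*} [Category C] [Abelian C]

lemma proj_of_split {A B : C} (f : A ⟶ B) (ρ : B ⟶ A) (hfρ : f ≫ ρ = 𝟙 A)
    (hA : Projective A) (hC : Projective (cokernel f)) : Projective B := by
  have hz : f ≫ (𝟙 B - ρ ≫ f) = 0 := by
    rw [Preadditive.comp_sub, Category.comp_id, ← Category.assoc, hfρ, Category.id_comp,
      sub_self]
  set d : cokernel f ⟶ B := cokernel.desc f (𝟙 B - ρ ≫ f) hz with hd
  have hkey : ρ ≫ f + cokernel.π f ≫ d = 𝟙 B := by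
    rw [hd, cokernel.π_desc]; abel
  constructor
  intro E W f' e he
  obtain ⟨g₁, hg₁⟩ := hA.factors (f ≫ f') e
  obtain ⟨g₂, hg₂⟩ := hC.factors (d ≫ f') e
  refine ⟨ρ ≫ g₁ + cokernel.π f ≫ g₂, ?_⟩
  rw [Preadditive.add_comp, Category.assoc, Category.assoc, hg₁, hg₂,
    ← Category.assoc, ← Category.assoc, ← Preadditive.add_comp, hkey, Category.id_comp]

lemma cokernel_retract {A B : C} (f : A ⟶ B) (ρ : B ⟶ A) (hfρ : f ≫ ρ = 𝟙 A) :
    ∃ d : cokernel f ⟶ B, d ≫ cokernel.π f = 𝟙 (cokernel f) := by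
  have hz : f ≫ (𝟙 B - ρ ≫ f) = 0 := by
    rw [Preadditive.comp_sub, Category.comp_id, ← Category.assoc, hfρ, Category.id_comp,
      sub_self]
  refine ⟨cokernel.desc f (𝟙 B - ρ ≫ f) hz, ?_⟩
  rw [← cancel_epi (cokernel.π f), ← Category.assoc, cokernel.π_desc, Category.comp_id,
    Preadditive.sub_comp, Category.id_comp, Category.assoc, cokernel.condition,
    Limits.comp_zero, sub_zero]

end SplitProj

/-- The Yoneda-style map `M(i) → V` determined by `x ∈ V_i`. -/
noncomputable def yonedaMap (V : FIMod k) (i : ℕ) (x : V.obj (FI.of i)) : Mrep k i ⟶ V where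
  app n := ModuleCat.ofHom (Finsupp.lsum k fun e : Fin i ↪ Fin n.n =>
    LinearMap.toSpanSingleton k _ ((V.map (e : FI.of i ⟶ n)) x))
  naturality m n g := by
    refine ModuleCat.hom_ext (Finsupp.lhom_ext fun e a => ?_)
    show (Finsupp.lsum k _) (Finsupp.lmapDomain k k _ (Finsupp.single e a)) =
      V.map g ((Finsupp.lsum k _) (Finsupp.single e a))
    rw [lmapDomain_apply, mapDomain_single, lsum_single, lsum_single]
    show a • (V.map (e.trans g : FI.of i ⟶ n)) x = V.map g (a • (V.map (e : FI.of i ⟶ m)) x)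
    rw [map_smul]
    congr 1
    have : (e.trans g : FI.of i ⟶ n) = (e : FI.of i ⟶ m) ≫ g := rfl
    rw [this]
    erw [V.map_comp]
    rfl

lemma yonedaMap_comp (V W : FIMod k) (i : ℕ) (x : V.obj (FI.of i)) (φ : V ⟶ W) :
    yonedaMap k V i x ≫ φ = yonedaMap k W i (φ.app (FI.of i) x) := by
  ext n : 2
  refine ModuleCat.hom_ext (Finsupp.lhom_ext fun e a => ?_)
  show φ.app n ((Finsupp.lsum k _) (Finsupp.single e a)) = (Finsupp.lsum k _) (Finsupp.single e a)
  rw [lsum_single, lsum_single]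
  show φ.app n (a • (V.map (e : FI.of i ⟶ n)) x) = a • (W.map (e : FI.of i ⟶ n)) (φ.app _ x)
  rw [map_smul]
  all_goals exact congrArg (a • ·) (ConcreteCategory.congr_hom (φ.naturality (e : FI.of i ⟶ n)) x)

lemma yonedaMap_eq (V : FIMod k) (i : ℕ) (f : Mrep k i ⟶ V) :
    f = yonedaMap k V i (f.app (FI.of i) (Finsupp.single (𝟙 (FI.of i)) 1)) := by
  ext n : 2
  refine ModuleCat.hom_ext (Finsupp.lhom_ext fun e a => ?_)
  have h1 : (Mrep k i).map (e : FI.of i ⟶ n) (Finsupp.single (𝟙 (FI.of i)) a)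
      = Finsupp.single e a := by
    show Finsupp.lmapDomain k k _ (Finsupp.single _ a) = _
    rw [lmapDomain_apply]
    refine Finsupp.mapDomain_single.trans ?_
    congr 1
    all_goals exact DFunLike.ext _ _ fun x => rfl
  have h2 : f.app n ((Mrep k i).map (e : FI.of i ⟶ n) (Finsupp.single (𝟙 (FI.of i)) a)) =
      V.map (e : FI.of i ⟶ n) (f.app (FI.of i) (Finsupp.single (𝟙 (FI.of i)) a)) :=
    ConcreteCategory.congr_hom (f.naturality (e : FI.of i ⟶ n)) _
  have h3 : Finsupp.single (𝟙 (FI.of i)) a = a • Finsupp.single (𝟙 (FI.of i)) (1 : k) := by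
    rw [Finsupp.smul_single, smul_eq_mul, mul_one]
  show f.app n (Finsupp.single e a) =
    (Finsupp.lsum k fun e : Fin i ↪ Fin n.n => LinearMap.toSpanSingleton k _
      ((V.map (e : FI.of i ⟶ n)) (f.app (FI.of i) (Finsupp.single (𝟙 (FI.of i)) 1))))
      (Finsupp.single e a)
  rw [lsum_single, LinearMap.toSpanSingleton_apply, ← h1, h2]
  exact (congrArg (fun x => (V.map (e : FI.of i ⟶ n)) (f.app (FI.of i) x)) h3).trans
    ((congrArg (V.map (e : FI.of i ⟶ n)) ((f.app (FI.of i)).hom.map_smul a _)).trans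
      ((V.map (e : FI.of i ⟶ n)).hom.map_smul a _))

lemma Mrep_projective (i : ℕ) : Projective (Mrep k i) := by
  constructor
  intro E W f e he
  have : Epi (e.app (FI.of i)) := inferInstance
  obtain ⟨y, hy⟩ := (ModuleCat.epi_iff_surjective (e.app (FI.of i))).mp this
    (f.app (FI.of i) (Finsupp.single (𝟙 (FI.of i)) 1))
  refine ⟨yonedaMap k E i y, ?_⟩
  rw [yonedaMap_comp, hy, ← yonedaMap_eq]

lemma DM_projective (i : ℕ) : Projective (Dobj k (Mrep k i)) := by
  cases i with
  | zero => exact proj_of_isZero (DM0_isZero k)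
  | succ j =>
    obtain ⟨φ⟩ := DM_iso k j
    have hbi : Projective (⨁ fun _ : Fin (j + 1) => Mrep k j) := by
      refine proj_of_isColimit_discrete (fun s => ?_)
        (biproduct.isColimit fun _ : Fin (j + 1) => Mrep k j)
      exact Mrep_projective k j
    exact proj_of_retract φ.hom φ.inv φ.hom_inv_id hbi

lemma shiftM_projective (i : ℕ) : Projective ((shiftF k).obj (Mrep k i)) :=
  proj_of_split (toShift k (Mrep k i)) (rmap k i) (toShift_rmap k i)
    (Mrep_projective k i) (DM_projective k i)

lemma D_projective (V : FIMod k) (hV : Projective V) : Projective (Dobj k V) := by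
  classical
  -- the free module covering V
  let T := (n : ℕ) × V.obj (FI.of n)
  let F : T → FIMod k := fun s => Mrep k s.1
  let Q : FIMod k := ∐ F
  let eQ : Q ⟶ V := Sigma.desc fun s => yonedaMap k V s.1 s.2
  have happQ : ∀ n, Epi (eQ.app n) := by
    intro n
    rw [ModuleCat.epi_iff_surjective]
    intro w
    refine ⟨(Sigma.ι F ⟨n.n, w⟩).app n (Finsupp.single (𝟙 (FI.of n.n)) 1), ?_⟩
    have h1 : (Sigma.ι F ⟨n.n, w⟩ ≫ eQ) = yonedaMap k V n.n w := Sigma.ι_desc _ _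
    have h2 : (Sigma.ι F ⟨n.n, w⟩ ≫ eQ).app n (Finsupp.single (𝟙 (FI.of n.n)) 1) =
        (yonedaMap k V n.n w).app n (Finsupp.single (𝟙 (FI.of n.n)) 1) := by
      rw [h1]
    have h3 : (yonedaMap k V n.n w).app n (Finsupp.single (𝟙 (FI.of n.n)) 1) = w := by
      show (Finsupp.lsum k _) (Finsupp.single _ (1 : k)) = w
      refine (Finsupp.lsum_single ..).trans ?_
      show (1 : k) • (V.map (𝟙 (FI.of n.n))) w = w
      rw [V.map_id, one_smul]
      rfl
    exact h2.trans h3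
  haveI := happQ
  haveI heQ : Epi eQ := NatTrans.epi_of_epi_app _
  haveI := hV
  -- V is a retract of Q
  let sV : V ⟶ Q := Projective.factorThru (𝟙 V) eQ
  have hsV : sV ≫ eQ = 𝟙 V := Projective.factorThru_comp _ _
  have hDretract : (Dfun k).map sV ≫ (Dfun k).map eQ = 𝟙 ((Dfun k).obj V) := by
    rw [← Functor.map_comp, hsV, CategoryTheory.Functor.map_id]
  -- the shift of Q is a colimit of the shifted representables
  haveI : PreservesColimitsOfSize.{0, 0} (shiftF k) :=
    inferInstanceAs (PreservesColimitsOfSize.{0, 0}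
      ((Functor.whiskeringLeft FI FI (ModuleCat.{0} k)).obj iota))
  have hc := isColimitOfPreserves (shiftF k) (colimit.isColimit (Discrete.functor F))
  let c2 : Cocone (Discrete.functor F ⋙ shiftF k) :=
    ⟨Q, Discrete.natTrans fun s => rmap k s.as.1 ≫ Sigma.ι F s.as⟩
  let ρQ : (shiftF k).obj Q ⟶ Q := hc.desc c2
  have hρ : toShift k Q ≫ ρQ = 𝟙 Q := by
    refine colimit.hom_ext fun s => ?_
    have h4 : colimit.ι (Discrete.functor F) s ≫ toShift k Q =
        toShift k ((Discrete.functor F).obj s) ≫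
          (shiftF k).map (colimit.ι (Discrete.functor F) s) :=
      (natToShift k).naturality (colimit.ι (Discrete.functor F) s)
    have h5 : (shiftF k).map (colimit.ι (Discrete.functor F) s) ≫ ρQ = c2.ι.app s :=
      hc.fac c2 s
    rw [← Category.assoc, h4, Category.assoc, h5]
    show toShift k (Mrep k s.as.1) ≫ rmap k s.as.1 ≫ Sigma.ι F s.as =
      colimit.ι (Discrete.functor F) s ≫ 𝟙 Q
    rw [← Category.assoc, toShift_rmap, Category.id_comp, Category.comp_id]
  have hSQproj : Projective ((shiftF k).obj Q) := by
    refine proj_of_isColimit_discrete (fun s => ?_) hc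
    exact shiftM_projective k s.as.1
  obtain ⟨d, hd⟩ := cokernel_retract (toShift k Q) ρQ hρ
  have hDQ : Projective (Dobj k Q) :=
    proj_of_retract d (cokernel.π (toShift k Q)) hd hSQproj
  exact proj_of_retract ((Dfun k).map sV) ((Dfun k).map eQ) hDretract hDQ

end Stmt7Aux

/-- `D M(i) ≅ M(i-1)^{⊕ i}` for `i ≥ 1`, `D M(0) = 0`, and `D` preserves projectives. -/
theorem stmt_7 (k : Type) [CommRing k] (i : ℕ) (hi : 1 ≤ i) :
    Nonempty (Dobj k (Mrep k i) ≅ ⨁ fun _ : Fin i => Mrep k (i - 1)) ∧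
    IsZero (Dobj k (Mrep k 0)) ∧
    (∀ V : FIMod k, Projective V → Projective (Dobj k V)) := by
  refine ⟨?_, DM0_isZero k, fun V hV => D_projective k V hV⟩
  obtain ⟨j, rfl⟩ : ∃ j, i = j + 1 := ⟨i - 1, (Nat.succ_pred_eq_of_pos hi).symm⟩
  simpa using DM_iso k j
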